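/- Let n = 2^e · p_1^{e_1} ⋯ p_r^{e_r} with e ≥ 1 and p_1 < ⋯ < p_r distinct odd primes, and let k be a positive integer with gcd(k, w(n)) = 1. Then D_k(u, 1) = u for all u ∈ ℤ/nℤ if and only if there exists a positive integer a_0 with gcd(a_0, l_0) = 1 such that D_{a_0}(u, 1) = u for all u ∈ ℤ/2^eℤ and k ≡ a_0 (mod l_0), and for each i = 1, …, r there exists a positive integer a_i with gcd(a_i, l_i) = 1 such that D_{a_i}(u, 1) = u for all u ∈ ℤ/p_i^{e_i}ℤ and k ≡ a_i (mod l_i). -/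

import Mathlib

open Polynomial
set_option maxHeartbeats 1600000

section RingLemmas
variable {R : Type*} [CommRing R]

/-- P1 -/
lemma aux_pow_one_add (c z : R) : ∀ m : ℕ, ∃ w, (1 + c*z)^m = 1 + c*w := by
  intro m
  induction m with
  | zero => exact ⟨0, by ring⟩
  | succ m ih =>
    obtain ⟨w, hw⟩ := ih
    exact ⟨w + z + c*z*w, by rw [pow_succ, hw]; ring⟩

/-- B1 -/
lemma aux_binom (t : R) : ∀ m : ℕ, ∃ w, (1+t)^m = 1 + m*t + t^2*w := by
  intro m
  induction m with
  | zero => exact ⟨0, by push_cast; ring⟩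
  | succ m ih =>
    obtain ⟨w, hw⟩ := ih
    refine ⟨w + m + t*w, ?_⟩
    rw [pow_succ, hw]; push_cast; ring

/-- LTE doubling -/
lemma aux_lte (c : ℕ) (hc : 1 ≤ c) (h : R) :
    ∀ s : ℕ, ∃ g, (1 + 2^c*h)^(2^s) = 1 + 2^(c+s)*g := by
  intro s
  induction s with
  | zero => exact ⟨h, by norm_num⟩
  | succ s ih =>
    obtain ⟨g, hg⟩ := ih
    refine ⟨g + 2^(c+s-1)*g^2, ?_⟩
    have h1 : (2:ℕ)^(s+1) = 2^s*2 := by ring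
    have h2 : c + s - 1 + (c + s + 1) = (c+s)*2 := by omega
    rw [h1, pow_mul, hg]
    have : (2:R)^(c+s)*2^(c+s) = 2^(c+s-1)*2^(c+s+1) := by
      rw [← pow_add, ← pow_add]; congr 1; omega
    calc (1 + 2^(c+s)*g)^2 = 1 + 2^(c+s+1)*g + (2^(c+s)*2^(c+s))*g^2 := by
          rw [pow_succ]; ring
      _ = 1 + 2^(c+s+1)*(g + 2^(c+s-1)*g^2) := by rw [this]; ring

/-- prime freshman's dream with explicit a*b factor -/
lemma aux_add_pow_prime (p : ℕ) (hp : p.Prime) (a b : R) :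
    ∃ c, (a+b)^p = a^p + b^p + p*(a*b*c) := by
  classical
  have h2 : 2 ≤ p := hp.two_le
  have key : ∀ j ∈ Finset.range (p-1), ∃ m : ℕ, (p.choose (j+1)) = p * m := by
    intro j hj
    simp only [Finset.mem_range] at hj
    exact (Nat.Prime.dvd_choose_self hp (Nat.succ_ne_zero j) (by omega))
  choose m hm using key
  refine ⟨∑ j ∈ Finset.range (p-1) |>.attach, a^j.1 * b^(p-2-j.1) * (m j.1 j.2), ?_⟩
  rw [add_pow]
  have hsplit : Finset.range (p+1) = Finset.range (p-1+1+1) := by congr 1; omega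
  rw [hsplit, Finset.sum_range_succ, Finset.sum_range_succ']
  have e1 : p - 1 + 1 = p := by omega
  simp only [e1, pow_zero, Nat.choose_self, Nat.choose_zero_right, Nat.sub_zero, Nat.cast_one,
    mul_one, one_mul]
  have : ∀ j ∈ (Finset.range (p-1)).attach,
      a^(j.1+1) * b^(p-(j.1+1)) * (p.choose (j.1+1) : R)
        = (p:R)*(a*b*(a^j.1*b^(p-2-j.1)*(m j.1 j.2))) := by
    intro j _
    have hj := j.2
    simp only [Finset.mem_range] at hj
    have : (p.choose (j.1+1) : R) = (p:R) * (m j.1 j.2 : R) := by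
      rw [hm j.1 j.2]; push_cast; ring
    rw [this]
    have hb : p - (j.1+1) = (p-2-j.1) + 1 := by omega
    rw [hb, pow_succ, pow_succ]
    ring
  rw [← Finset.sum_attach (Finset.range (p-1))
      (fun j => a^(j+1) * b^(p-(j+1)) * (p.choose (j+1) : R))]
  rw [Finset.sum_congr rfl this]
  have hS : ∑ j ∈ (Finset.range (p-1)).attach,
      (p:R)*(a*b*(a^j.1*b^(p-2-j.1)*(m j.1 j.2)))
      = (p:R)*(a*b*∑ j ∈ (Finset.range (p-1)).attach, a^j.1*b^(p-2-j.1)*(m j.1 j.2)) := by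
    rw [Finset.mul_sum, Finset.mul_sum]
  rw [hS]
  simp only [Nat.sub_self, pow_zero, mul_one]
  ring

end RingLemmas

set_option linter.unusedSectionVars false

section Quad
variable {A : Type*} [CommRing A] [Nontrivial A]

noncomputable def fq (u : A) : A[X] := X^2 + C (-u) * X + C 1

lemma fq_monic (u : A) : (fq u).Monic := by
  unfold fq
  rw [add_assoc]
  apply monic_X_pow_add
  exact lt_of_le_of_lt (degree_linear_le) (by norm_num)

lemma fq_natDegree (u : A) : (fq u).natDegree = 2 := by
  unfold fq
  compute_degree!

/-- the root x in AdjoinRoot -/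
noncomputable def qx (u : A) : AdjoinRoot (fq u) := AdjoinRoot.root (fq u)

lemma qx_sq (u : A) : (qx u)^2 = AdjoinRoot.of (fq u) u * qx u - 1 := by
  have h := AdjoinRoot.eval₂_root (fq u)
  unfold fq at h
  simp only [eval₂_add, eval₂_mul, eval₂_pow, eval₂_X, eval₂_C, eval₂_neg, eval₂_one,
    map_neg, map_one] at h
  unfold qx fq
  linear_combination h

lemma qx_mul (u : A) : qx u * (AdjoinRoot.of (fq u) u - qx u) = 1 := by
  linear_combination -(qx_sq u)

lemma qof_injective (u : A) : Function.Injective (AdjoinRoot.of (fq u)) := by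
  intro c d hcd
  have h0 : AdjoinRoot.of (fq u) (c - d) = 0 := by rw [map_sub, hcd, sub_self]
  by_contra hne
  have hcd0 : c - d ≠ 0 := fun h => hne (by linear_combination h)
  have hdvd : fq u ∣ C (c - d) := by
    rw [← AdjoinRoot.mk_eq_zero]
    exact h0
  obtain ⟨g, hg⟩ := hdvd
  have hgne : g ≠ 0 := by
    rintro rfl
    rw [mul_zero] at hg
    exact hcd0 (Polynomial.C_eq_zero.mp (by simpa using hg))
  have hne2 : (fq u).leadingCoeff * g.leadingCoeff ≠ 0 := by
    rw [(fq_monic u).leadingCoeff, one_mul]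
    exact leadingCoeff_ne_zero.mpr hgne
  have hdeg := congrArg natDegree hg
  rw [natDegree_C, natDegree_mul' hne2, fq_natDegree] at hdeg
  omega

lemma q_eval_dickson (u : A) (k : ℕ) :
    AdjoinRoot.of (fq u) (eval u (dickson 1 1 k))
      = (qx u)^k + (AdjoinRoot.of (fq u) u - qx u)^k := by
  have h1 : AdjoinRoot.of (fq u) u = qx u + (AdjoinRoot.of (fq u) u - qx u) := by ring
  have h2 := dickson_one_one_eval_add_inv (qx u) (AdjoinRoot.of (fq u) u - qx u) (qx_mul u) k
  rw [← h2, ← h1]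
  rw [← eval₂_at_apply, eval₂_eq_eval_map, map_dickson, map_one]

/-- key reduction: if the product vanishes, the dickson evals agree -/
lemma q_eval_eq (u : A) (k a : ℕ) (hle : a ≤ k)
    (h0 : ((qx u)^(k-a) - 1) * ((qx u)^(k+a) - 1) = 0) :
    eval u (dickson 1 1 k) = eval u (dickson 1 1 a) := by
  set x := qx u with hx
  set y := AdjoinRoot.of (fq u) u - qx u with hy
  have hxy : x * y = 1 := qx_mul u
  apply qof_injective u
  rw [q_eval_dickson, q_eval_dickson]
  -- multiply by x^k
  have hxk : x^k * ((x^k + y^k) - (x^a + y^a)) = 0 := by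
    have e1 : x^k * y^k = 1 := by rw [← mul_pow, hxy, one_pow]
    have e2 : x^k * y^a = x^(k-a) := by
      have : x^k = x^(k-a) * x^a := (pow_sub_mul_pow x hle).symm
      rw [this, mul_assoc, ← mul_pow, hxy, one_pow, mul_one]
    have e3 : x^k * x^a = x^(k+a) := by rw [← pow_add]
    have e4 : x^(k-a) * x^(k+a) = x^k * x^k := by
      rw [← pow_add, ← pow_add]; congr 1; omega
    linear_combination h0 + e1 - e2 - e3 - e4
  have := congrArg (fun z => y^k * z) hxk
  simp only [mul_zero] at this
  have e5 : y^k * x^k = 1 := by rw [← mul_pow, mul_comm, hxy, one_pow]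
  rw [← mul_assoc, e5, one_mul, sub_eq_zero] at this
  linear_combination this

end Quad

section ZModAux

lemma zmod_val_cast {m : ℕ} [NeZero m] (z : ZMod m) : ((z.val : ℕ) : ZMod m) = z := by
  rw [ZMod.natCast_val, ZMod.cast_id]

lemma zmod_div_of_cast_zero {m d : ℕ} [NeZero m] (hd : d ∣ m) (z : ZMod m)
    (h : ZMod.castHom hd (ZMod d) z = 0) : ∃ y : ZMod m, z = d * y := by
  have h1 : ZMod.castHom hd (ZMod d) z = ((z.val : ℕ) : ZMod d) := by
    conv_lhs => rw [← zmod_val_cast z]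
    rw [map_natCast]
  rw [h1, ZMod.natCast_eq_zero_iff] at h
  obtain ⟨c, hc⟩ := h
  refine ⟨(c : ZMod m), ?_⟩
  rw [← zmod_val_cast z, hc]
  push_cast
  ring

lemma zmod_fermat (p t : ℕ) [hpf : Fact p.Prime] (ht : 1 ≤ t) (u : ZMod (p^t)) :
    ∃ y : ZMod (p^t), u^p = u + p*y := by
  haveI : NeZero (p^t) := ⟨pow_ne_zero _ hpf.out.ne_zero⟩
  have hd : p ∣ p^t := dvd_pow_self p (by omega)
  have h : ZMod.castHom hd (ZMod p) (u^p - u) = 0 := by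
    rw [map_sub, map_pow, ZMod.pow_card, sub_self]
  obtain ⟨y, hy⟩ := zmod_div_of_cast_zero hd _ h
  exact ⟨y, by linear_combination hy⟩

end ZModAux

section OddLocal

lemma hbezA {R : Type*} [CommRing R] (x : R) (N M : ℕ) :
    ∃ α, x^(N*M) - 1 = (x^N - 1) * α := by
  obtain ⟨α, hα⟩ := sub_dvd_pow_sub_pow (x^N) 1 M
  rw [one_pow] at hα
  exact ⟨α, by rw [pow_mul]; exact hα⟩

lemma odd_local (p t : ℕ) (hp : p.Prime) (hpodd : p % 2 = 1) (ht : 1 ≤ t)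
    (k a : ℕ) (hle : a ≤ k) (hpar : 2 ∣ (k+a))
    (hdvd : (p^(t-1) * ((p^2 - 1)/2)) ∣ (k - a)) (u : ZMod (p^t)) :
    eval u (dickson 1 1 k) = eval u (dickson 1 1 a) := by
  haveI : Fact p.Prime := ⟨hp⟩
  have hp3 : 3 ≤ p := by
    have := hp.two_le; rcases Nat.lt_or_ge p 3 with h | h
    · interval_cases p <;> omega
    · exact h
  haveI : NeZero (p^t) := ⟨pow_ne_zero _ hp.ne_zero⟩
  haveI : Fact (1 < p^t) := ⟨by
    calc 1 < p := by omega
    _ ≤ p^t := Nat.le_self_pow (by omega) p⟩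
  obtain ⟨c, hcp⟩ : ∃ c, p = 2*c+1 := ⟨p/2, by omega⟩
  have hc1 : 1 ≤ c := by omega
  -- exponent arithmetic
  have hsq : p^2 = 4*(c*c)+4*c+1 := by subst hcp; ring
  have e0 : (p^2-1)/2 = 2*(c*c)+2*c := by rw [hsq]; generalize c*c = m; omega
  have e1 : (p-1)*(c+1) = (p^2-1)/2 := by
    rw [e0]; have h' : p-1 = 2*c := by omega
    rw [h']; ring
  have e2 : (p+1)*c = (p^2-1)/2 := by
    rw [e0]; have h' : p+1 = 2*c+2 := by omega
    rw [h']; ring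
  have e3 : (p+1)*(c-1)+2 = (p-1)*c := by
    obtain ⟨d, rfl⟩ : ∃ d, c = d+1 := ⟨c-1, by omega⟩
    have h1 : p+1 = 2*d+4 := by omega
    have h2 : p-1 = 2*d+2 := by omega
    rw [h1, h2, Nat.add_sub_cancel]; ring
  set x : AdjoinRoot (fq u) := qx u with hxdef
  set ι : ZMod (p^t) →+* AdjoinRoot (fq u) := AdjoinRoot.of (fq u) with hιdef
  set P : AdjoinRoot (fq u) := ((p:ℕ) : AdjoinRoot (fq u)) with hPdef
  have hx2 : x^2 = ι u * x - 1 := qx_sq u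
  have hPι : P = ι ((p : ℕ) : ZMod (p^t)) := by rw [hPdef, map_natCast]
  have hPt : P^t = 0 := by
    rw [hPι, ← map_pow, ← Nat.cast_pow, ZMod.natCast_self, map_zero]
  -- Frobenius: E ∈ pR
  have hE : ∃ z, x^(2*p) - ι u * x^p + 1 = P * z := by
    obtain ⟨yf, hyf⟩ := zmod_fermat p t ht u
    set v : AdjoinRoot (fq u) := x^2 - ι u * x with hvdef
    have hzero : v + 1 = 0 := by rw [hvdef]; linear_combination hx2
    obtain ⟨c₁, hc₁⟩ := aux_add_pow_prime p hp v (1 : AdjoinRoot (fq u))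
    obtain ⟨c₂, hc₂⟩ := aux_add_pow_prime p hp (x^2) (-(ι u * x))
    have h0 : (v+1)^p = 0 := by rw [hzero]; exact zero_pow hp.ne_zero
    have hvp : v^p = -1 - P*(v*c₁) := by linear_combination h0 - hc₁
    have hveq : x^2 + -(ι u * x) = v := by rw [hvdef]; ring
    rw [hveq] at hc₂
    have hodd' : Odd p := Nat.odd_iff.mpr hpodd
    have hfm : (ι u)^p = ι u + P * ι yf := by
      rw [← map_pow, hyf, map_add, map_mul, map_natCast, hPdef]
    have hneg : (-(ι u * x))^p = -((ι u + P * ι yf) * x^p) := by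
      rw [hodd'.neg_pow, mul_pow, hfm]
    rw [hneg] at hc₂
    have hp2 : (x^2)^p = x^(2*p) := by ring
    rw [hp2] at hc₂
    exact ⟨-(v*c₁) - (x^2*(-(ι u * x))*c₂) + ι yf * x^p, by linear_combination hvp - hc₂⟩
  obtain ⟨zG, hG⟩ : ∃ z, (x^(p-1) - 1) * (x^(p+1) - 1) = P * z := by
    obtain ⟨z, hz⟩ := hE
    refine ⟨z, ?_⟩
    have hpow1 : x^(p-1) * x^(p+1) = x^(2*p) := by
      rw [← pow_add]; congr 1; omega
    have hpow2 : x^(p-1) * x^2 = x^(p+1) := by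
      rw [← pow_add]; congr 1; omega
    have hpow3 : x^(p-1) * x = x^p := by
      rw [← pow_succ]; congr 1; omega
    -- x^{p+1} = ιu x^p − x^{p-1}
    have h2' : x^(p+1) = ι u * x^p - x^(p-1) := by
      calc x^(p+1) = x^(p-1) * x^2 := hpow2.symm
        _ = x^(p-1) * (ι u * x - 1) := by rw [hx2]
        _ = ι u * (x^(p-1) * x) - x^(p-1) := by ring
        _ = ι u * x^p - x^(p-1) := by rw [hpow3]
    linear_combination hz + hpow1 - h2'
  -- base case
  have hbase1 : ∃ w, (x^((p^2-1)/2) - 1)*(x^2-1) = P * w := by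
    obtain ⟨α₁, hα₁⟩ := hbezA x (p-1) (c+1); rw [e1] at hα₁
    obtain ⟨β₁, hβ₁⟩ := hbezA x (p+1) c; rw [e2] at hβ₁
    obtain ⟨α₂, hα₂⟩ := hbezA x (p-1) c
    obtain ⟨β₂, hβ₂⟩ := hbezA x (p+1) (c-1)
    have hpow : x^2 * x^((p+1)*(c-1)) = x^((p-1)*c) := by
      rw [← pow_add]; congr 1; omega
    have esplit : x^2 - 1 = (x^((p-1)*c) - 1) - x^2*(x^((p+1)*(c-1)) - 1) := by
      linear_combination hpow
    refine ⟨zG*(β₁*α₂ - x^2*α₁*β₂), ?_⟩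
    calc (x^((p^2-1)/2) - 1)*(x^2-1)
        = (x^((p^2-1)/2) - 1)*(x^((p-1)*c) - 1)
          - x^2*((x^((p^2-1)/2) - 1)*(x^((p+1)*(c-1)) - 1)) := by
          rw [esplit]; ring
      _ = ((x^(p+1)-1)*β₁)*((x^(p-1)-1)*α₂)
          - x^2*(((x^(p-1)-1)*α₁)*((x^(p+1)-1)*β₂)) := by
          rw [← hα₂, ← hβ₁, ← hα₁, ← hβ₂]
      _ = ((x^(p-1)-1)*(x^(p+1)-1))*(β₁*α₂ - x^2*(α₁*β₂)) := by ring
      _ = P*(zG*(β₁*α₂ - x^2*α₁*β₂)) := by rw [hG]; ring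
  have hbase2 : ∃ v, (x^((p^2-1)/2) - 1)^2 = P * v := by
    obtain ⟨α₁, hα₁⟩ := hbezA x (p-1) (c+1); rw [e1] at hα₁
    obtain ⟨β₁, hβ₁⟩ := hbezA x (p+1) c; rw [e2] at hβ₁
    refine ⟨zG*(α₁*β₁), ?_⟩
    calc (x^((p^2-1)/2) - 1)^2
        = ((x^(p-1)-1)*α₁) * ((x^(p+1)-1)*β₁) := by rw [← hα₁, ← hβ₁]; ring
      _ = ((x^(p-1)-1)*(x^(p+1)-1))*(α₁*β₁) := by ring
      _ = P*(zG*(α₁*β₁)) := by rw [hG]; ring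
  -- induction
  have main : ∀ s : ℕ,
      (∃ w, (x^(p^s*((p^2-1)/2)) - 1)*(x^2-1) = P^(s+1) * w) ∧
      (∃ v, (x^(p^s*((p^2-1)/2)) - 1)^2 = P^(s+1) * v) := by
    intro s
    induction s with
    | zero =>
      simp only [pow_zero, one_mul, zero_add, pow_one]
      exact ⟨hbase1, hbase2⟩
    | succ s ih =>
      obtain ⟨⟨w, ihw⟩, ⟨v, ihv⟩⟩ := ih
      obtain ⟨A, hAdef⟩ : ∃ A', A' = x^(p^s*((p^2-1)/2)) - 1 := ⟨_, rfl⟩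
      rw [← hAdef] at ihw ihv
      have hA1 : (1 : AdjoinRoot (fq u)) + A = x^(p^s*((p^2-1)/2)) := by
        rw [hAdef]; ring
      obtain ⟨cc, hcc⟩ := aux_add_pow_prime p hp (1 : AdjoinRoot (fq u)) A
      have hA' : x^(p^(s+1)*((p^2-1)/2)) = 1 + A^p + P*(A*cc) := by
        have hexp : p^(s+1)*((p^2-1)/2) = (p^s*((p^2-1)/2))*p := by
          rw [pow_succ]; ring
        rw [hexp, pow_mul, ← hA1, hcc]
        push_cast
        ring
      have hx1 : x^(p^(s+1)*((p^2-1)/2)) - 1 = A^p + P*(A*cc) := by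
        rw [hA']; ring
      -- power splitting facts
      have h1b : A^(p-3)*(A^2*A) = A^p := by
        rw [← pow_succ, ← pow_add]; congr 1; omega
      have h1c : A^(p-3)*(A^2*A^2) = A^p*A := by
        rw [← pow_add, ← pow_add, ← pow_succ]; congr 1; omega
      constructor
      · -- part 1
        have step1 : A^p*(x^2-1) = P^(s+2)*(P^s*(A^(p-3)*v*w)) := by
          calc A^p*(x^2-1) = A^(p-3)*(A^2*(A*(x^2-1))) := by rw [← h1b]; ring
            _ = A^(p-3)*((P^(s+1)*v)*(P^(s+1)*w)) := by rw [ihw, ihv]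
            _ = P^(s+2)*(P^s*(A^(p-3)*v*w)) := by ring
        refine ⟨P^s*(A^(p-3)*v*w) + cc*w, ?_⟩
        rw [hx1]
        calc (A^p + P*(A*cc))*(x^2-1)
            = A^p*(x^2-1) + (P*cc)*(A*(x^2-1)) := by ring
          _ = P^(s+2)*(P^s*(A^(p-3)*v*w)) + (P*cc)*(P^(s+1)*w) := by rw [step1, ihw]
          _ = P^(s+2)*(P^s*(A^(p-3)*v*w) + cc*w) := by ring
      · -- part 2
        have hq : s+2 ≤ (s+1)*p := by
          calc s+2 ≤ (s+1)*3 := by omega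
          _ ≤ (s+1)*p := Nat.mul_le_mul_left _ hp3
        have hPsplit : P^((s+1)*p) = P^(s+2) * P^((s+1)*p-(s+2)) := by
          rw [← pow_add]; congr 1; omega
        have hA2p : (A^p)^2 = P^(s+2) * (P^((s+1)*p-(s+2)) * v^p) := by
          calc (A^p)^2 = (A^2)^p := by ring
            _ = (P^(s+1)*v)^p := by rw [ihv]
            _ = P^((s+1)*p)*v^p := by rw [mul_pow, ← pow_mul]
            _ = P^(s+2) * (P^((s+1)*p-(s+2)) * v^p) := by rw [hPsplit]; ring
        have hterm2 : A^p*(P*(A*cc)) = P^(s+2)*(P^(s+1)*(A^(p-3)*v^2*cc)) := by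
          calc A^p*(P*(A*cc)) = (A^(p-3)*(A^2*A^2))*(P*cc) := by rw [h1c]; ring
            _ = (A^(p-3)*((P^(s+1)*v)*(P^(s+1)*v)))*(P*cc) := by rw [ihv]
            _ = P^(s+2)*(P^(s+1)*(A^(p-3)*v^2*cc)) := by ring
        have hterm3 : (P*(A*cc))^2 = P^(s+2)*(P*(v*cc^2)) := by
          calc (P*(A*cc))^2 = P^2*cc^2*(A^2) := by ring
            _ = P^2*cc^2*(P^(s+1)*v) := by rw [ihv]
            _ = P^(s+2)*(P*(v*cc^2)) := by ring
        refine ⟨P^((s+1)*p-(s+2))*v^p + 2*(P^(s+1)*(A^(p-3)*v^2*cc)) + P*(v*cc^2), ?_⟩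
        rw [hx1]
        calc (A^p + P*(A*cc))^2
            = (A^p)^2 + 2*(A^p*(P*(A*cc))) + (P*(A*cc))^2 := by ring
          _ = P^(s+2)*(P^((s+1)*p-(s+2))*v^p) + 2*(P^(s+2)*(P^(s+1)*(A^(p-3)*v^2*cc)))
              + P^(s+2)*(P*(v*cc^2)) := by rw [hA2p, hterm2, hterm3]
          _ = P^(s+2)*(P^((s+1)*p-(s+2))*v^p + 2*(P^(s+1)*(A^(p-3)*v^2*cc)) + P*(v*cc^2)) := by
              ring
      -- done induction
  -- conclude
  obtain ⟨⟨w, hw⟩, -⟩ := main (t-1)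
  have ht' : (t-1)+1 = t := by omega
  rw [ht', hPt, zero_mul] at hw
  -- factor the target product
  obtain ⟨m₁, hm₁⟩ := hdvd
  obtain ⟨m₂, hm₂⟩ := hpar
  obtain ⟨α, hα⟩ := hbezA x (p^(t-1) * ((p^2 - 1)/2)) m₁
  obtain ⟨β, hβ⟩ := hbezA x 2 m₂
  rw [← hm₁] at hα
  rw [← hm₂] at hβ
  apply q_eval_eq u k a hle
  rw [hα, hβ]
  have hxx : (x^(p^(t-1)*((p^2-1)/2)) - 1) * (x^2-1) = 0 := hw
  calc (x^(p^(t-1)*((p^2-1)/2)) - 1)*α * ((x^2-1)*β)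
      = ((x^(p^(t-1)*((p^2-1)/2)) - 1) * (x^2-1)) * (α*β) := by ring
    _ = 0 := by rw [hxx, zero_mul]

end OddLocal

section TwoLocal

lemma aux_chain {R : Type*} [CommRing R] (x ρ κ : R)
    (hx2 : x^2 = 1 + 2*ρ) (hκ : ρ^2 = 2*κ) :
    ∀ s : ℕ, ∃ δ, x^(2^(s+1)) = 1 + 2^(s+1)*ρ + 2^(s+2)*δ := by
  intro s
  induction s with
  | zero => exact ⟨0, by simpa using by linear_combination hx2⟩
  | succ s ih =>
    obtain ⟨δ, hδ⟩ := ih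
    refine ⟨δ + 2^s*(κ+2*ρ*δ+2*δ^2), ?_⟩
    have hexp : (2:ℕ)^(s+1+1) = 2^(s+1)*2 := by rw [pow_succ]
    rw [hexp, pow_mul, hδ]
    linear_combination ((2:R)^(2*s+2))*hκ

lemma two_local (e : ℕ) (he : 1 ≤ e) (k a : ℕ) (hle : a ≤ k)
    (hpar : 2 ≤ e → (k % 2 = 1 ∧ a % 2 = 1))
    (hdvd : (if e < 3 then 3*2^(e-1) else 3*2^(e-2)) ∣ (k - a)) (u : ZMod (2^e)) :
    eval u (dickson 1 1 k) = eval u (dickson 1 1 a) := by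
  haveI : NeZero (2^e) := ⟨pow_ne_zero _ (by norm_num)⟩
  haveI : Fact (1 < 2^e) := ⟨by
    calc 1 < 2 := one_lt_two
    _ ≤ 2^e := Nat.le_self_pow (by omega) 2⟩
  set x : AdjoinRoot (fq u) := qx u with hxdef
  set ι : ZMod (2^e) →+* AdjoinRoot (fq u) := AdjoinRoot.of (fq u) with hιdef
  have hx2 : x^2 = ι u * x - 1 := qx_sq u
  have h2e : (2:(AdjoinRoot (fq u)))^e = 0 := by
    have h1 : ((2^e : ℕ) : ZMod (2^e)) = 0 := ZMod.natCast_self _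
    calc (2:(AdjoinRoot (fq u)))^e = ((2^e : ℕ) : AdjoinRoot (fq u)) := by push_cast; ring
      _ = ι ((2^e : ℕ) : ZMod (2^e)) := (map_natCast ι _).symm
      _ = 0 := by rw [h1, map_zero]
  apply q_eval_eq u k a hle
  -- now prove the product vanishes
  rcases Nat.even_or_odd u.val with huev | huod
  · -- u even
    obtain ⟨V, hV⟩ : ∃ V, u.val = 2*V := by
      obtain ⟨V, hV0⟩ := huev; exact ⟨V, by omega⟩
    have hu2V : ι u = 2 * ι ((V : ℕ) : ZMod (2^e)) := by
      have h : u = 2*((V:ℕ) : ZMod (2^e)) := by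
        rw [← zmod_val_cast u, hV]
        push_cast
        ring
      calc ι u = ι (2*((V:ℕ) : ZMod (2^e))) := congrArg ι h
        _ = 2 * ι ((V : ℕ) : ZMod (2^e)) := by rw [map_mul, map_ofNat]
    set ρ : AdjoinRoot (fq u) := ι ((V:ℕ) : ZMod (2^e)) * x - 1 with hρdef
    have hxρ : x^2 = 1 + 2*ρ := by
      rw [hρdef, hx2, hu2V]; ring
    by_cases he1 : e = 1
    · -- e = 1
      subst he1
      have h2R : (2:(AdjoinRoot (fq u))) = 0 := by simpa using h2e
      rcases Nat.even_or_odd (k-a) with hka | hka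
      · obtain ⟨m, hm⟩ : ∃ m, k - a = 2*m := by
          obtain ⟨m, h0⟩ := hka; exact ⟨m, by omega⟩
        have : x^(k-a) = 1 := by
          rw [hm, pow_mul, hxρ]
          have : (1:AdjoinRoot (fq u)) + 2*ρ = 1 := by rw [h2R]; ring
          rw [this, one_pow]
        rw [this]
        ring
      · -- both odd
        obtain ⟨m, hm⟩ : ∃ m, k - a = 2*m+1 := hka
        have hkaodd : ∃ m', k + a = 2*m'+1 := by
          refine ⟨m + a, by omega⟩
        obtain ⟨m', hm'⟩ := hkaodd
        have hx2one : x^2 = 1 := by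
          rw [hxρ, h2R]; ring
        have hxka : x^(k-a) = x := by
          rw [hm, pow_add, pow_mul, hx2one, one_pow]
          simp
        have hxka' : x^(k+a) = x := by
          rw [hm', pow_add, pow_mul, hx2one, one_pow]
          simp
        rw [hxka, hxka']
        linear_combination hxρ + (1 - x + ρ)*h2R
    · -- e ≥ 2
      have he2 : 2 ≤ e := by omega
      obtain ⟨hkodd, haodd⟩ := hpar he2
      obtain ⟨m₁, hm₁⟩ : ∃ m₁, k - a = 2*m₁ := ⟨(k-a)/2, by omega⟩
      obtain ⟨m₂, hm₂⟩ : ∃ m₂, k + a = 2*m₂ := ⟨(k+a)/2, by omega⟩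
      by_cases he2' : e = 2
      · subst he2'
        have h4R : (4:(AdjoinRoot (fq u))) = 0 := by
          have : (4:(AdjoinRoot (fq u))) = 2^2 := by norm_num
          rw [this]; simpa using h2e
        obtain ⟨w₁, hw₁⟩ := aux_pow_one_add (2:(AdjoinRoot (fq u))) ρ m₁
        obtain ⟨w₂, hw₂⟩ := aux_pow_one_add (2:(AdjoinRoot (fq u))) ρ m₂
        have hf1 : x^(k-a) = 1 + 2*w₁ := by rw [hm₁, pow_mul, hxρ, hw₁]
        have hf2 : x^(k+a) = 1 + 2*w₂ := by rw [hm₂, pow_mul, hxρ, hw₂]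
        rw [hf1, hf2]
        linear_combination (w₁*w₂)*h4R
      by_cases he3 : e = 3
      · subst he3
        have h8R : (8:(AdjoinRoot (fq u))) = 0 := by
          have : (8:(AdjoinRoot (fq u))) = 2^3 := by norm_num
          rw [this]; simpa using h2e
        have hx4 : x^4 = 1 + 4*(ρ+ρ^2) := by
          calc x^4 = (x^2)^2 := by ring
            _ = (1+2*ρ)^2 := by rw [hxρ]
            _ = 1 + 4*(ρ+ρ^2) := by ring
        have hm12 : m₁ + m₂ = k := by omega
        rcases Nat.even_or_odd m₁ with hev | hod
        · obtain ⟨n, hn⟩ : ∃ n, m₁ = 2*n := by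
            obtain ⟨n, h0⟩ := hev; exact ⟨n, by omega⟩
          obtain ⟨w, hw⟩ := aux_pow_one_add (4:(AdjoinRoot (fq u))) (ρ+ρ^2) n
          obtain ⟨w₂, hw₂⟩ := aux_pow_one_add (2:(AdjoinRoot (fq u))) ρ m₂
          have hf1 : x^(k-a) = 1 + 4*w := by
            rw [hm₁, hn, show 2*(2*n) = 4*n from by ring, pow_mul, hx4, hw]
          have hf2 : x^(k+a) = 1 + 2*w₂ := by rw [hm₂, pow_mul, hxρ, hw₂]
          rw [hf1, hf2]
          linear_combination (w*w₂)*h8R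
        · have hev2 : Even m₂ := by
            rcases Nat.even_or_odd m₂ with h | h
            · exact h
            · exfalso
              obtain ⟨b1, hb1⟩ := hod
              obtain ⟨b2, hb2⟩ := h
              omega
          obtain ⟨n, hn⟩ : ∃ n, m₂ = 2*n := by
            obtain ⟨n, h0⟩ := hev2; exact ⟨n, by omega⟩
          obtain ⟨w, hw⟩ := aux_pow_one_add (4:(AdjoinRoot (fq u))) (ρ+ρ^2) n
          obtain ⟨w₁, hw₁⟩ := aux_pow_one_add (2:(AdjoinRoot (fq u))) ρ m₁
          have hf2 : x^(k+a) = 1 + 4*w := by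
            rw [hm₂, hn, show 2*(2*n) = 4*n from by ring, pow_mul, hx4, hw]
          have hf1 : x^(k-a) = 1 + 2*w₁ := by rw [hm₁, pow_mul, hxρ, hw₁]
          rw [hf1, hf2]
          linear_combination (w₁*w)*h8R
      · -- e ≥ 4
        have he4 : 4 ≤ e := by omega
        rw [if_neg (by omega)] at hdvd
        obtain ⟨m, hm⟩ := hdvd
        have h2esub : ∀ c : ℕ, c ≤ e → ((2:(AdjoinRoot (fq u)))^c)*((2:(AdjoinRoot (fq u)))^(e-c)) = 0 := by
          intro c hc
          rw [← pow_add]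
          have : c + (e-c) = e := by omega
          rw [this, h2e]
        -- split on u.val % 4
        rcases Nat.even_or_odd V with hVev | hVod
        · -- u ≡ 0 mod 4
          obtain ⟨V₂, hV₂⟩ : ∃ V₂, V = 2*V₂ := by
            obtain ⟨V₂, h0⟩ := hVev; exact ⟨V₂, by omega⟩
          have hu4V : ι u = 4 * ι ((V₂ : ℕ) : ZMod (2^e)) := by
            have h : u = 4*((V₂:ℕ) : ZMod (2^e)) := by
              rw [← zmod_val_cast u, hV, hV₂]
              push_cast
              ring
            calc ι u = ι (4*((V₂:ℕ) : ZMod (2^e))) := congrArg ι h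
              _ = 4 * ι ((V₂ : ℕ) : ZMod (2^e)) := by rw [map_mul, map_ofNat]
          set σ : AdjoinRoot (fq u) := ι ((V₂:ℕ) : ZMod (2^e)) * x with hσdef
          have hxm : x^2 = -1 + 4*σ := by rw [hσdef, hx2, hu4V]; ring
          have hx4 : x^4 = 1 + 2^3*(2*σ^2 - σ) := by
            calc x^4 = (x^2)^2 := by ring
              _ = (-1+4*σ)^2 := by rw [hxm]
              _ = 1 + 2^3*(2*σ^2-σ) := by ring
          obtain ⟨g, hg⟩ := aux_lte 3 (by norm_num) (2*σ^2-σ) (e-4)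
          have hxp : x^(2^(e-2)) = 1 + 2^(e-1)*g := by
            have hex : (2:ℕ)^(e-2) = 4*2^(e-4) := by
              have : (2:ℕ)^(e-2) = 2^2*2^(e-4) := by rw [← pow_add]; congr 1; omega
              simpa using this
            rw [hex, pow_mul, show (x^4 = 1 + 2^3*(2*σ^2-σ)) from hx4, hg,
              show 3+(e-4) = e-1 from by omega]
          -- x^(k-a)
          obtain ⟨w', hw'⟩ := aux_binom ((2:(AdjoinRoot (fq u)))^(e-1)*g) (3*m)
          have hsq0 : ((2:(AdjoinRoot (fq u)))^(e-1))^2 = 0 := by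
            have : ((2:(AdjoinRoot (fq u)))^(e-1))^2 = (2^e)*(2^(e-2)) := by
              rw [← pow_add, ← pow_mul]; congr 1; omega
            rw [this, h2e, zero_mul]
          have hf1 : x^(k-a) - 1 = 2^(e-1)*(((3*m : ℕ))*g) := by
            have hka : k - a = 2^(e-2)*(3*m) := by rw [hm]; ring
            rw [hka, pow_mul, hxp, hw']
            push_cast
            linear_combination (g^2*w')*hsq0
          -- x^(k+a)
          have hy2 : ∃ y₂, x^(k+a) - 1 = 2*y₂ := by
            rcases Nat.even_or_odd m₂ with hev | hod
            · obtain ⟨n, hn⟩ : ∃ n, m₂ = 2*n := by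
                obtain ⟨n, h0⟩ := hev; exact ⟨n, by omega⟩
              obtain ⟨w, hw⟩ := aux_pow_one_add ((2:(AdjoinRoot (fq u)))^3) (2*σ^2-σ) n
              refine ⟨2^2*w, ?_⟩
              have : k + a = 4*n := by omega
              rw [this, show (4*n = 4*n) from rfl]
              have h4n : x^(4*n) = (x^4)^n := by rw [← pow_mul]
              rw [h4n, hx4, hw]
              ring
            · obtain ⟨n, hn⟩ : ∃ n, m₂ = 2*n+1 := hod
              obtain ⟨w, hw⟩ := aux_pow_one_add ((2:(AdjoinRoot (fq u)))^3) (2*σ^2-σ) n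
              refine ⟨-1 + 2*σ - 2^2*w + 2^4*(σ*w), ?_⟩
              have : k + a = 4*n + 2 := by omega
              rw [this]
              have hsplit : x^(4*n+2) = (x^4)^n * x^2 := by
                rw [← pow_mul, ← pow_add]
              rw [hsplit, hx4, hw, hxm]
              ring
          obtain ⟨y₂, hy₂⟩ := hy2
          rw [hf1, hy₂]
          have h21 : (2:(AdjoinRoot (fq u)))^(e-1)*2 = 0 := by
            have : (2:(AdjoinRoot (fq u)))^(e-1)*2 = 2^e := by
              rw [← pow_succ]; congr 1; omega
            rw [this, h2e]
          calc 2^(e-1)*(((3*m:ℕ))*g) * (2*y₂) = ((2:(AdjoinRoot (fq u)))^(e-1)*2) * ((3*m:ℕ)*g*y₂) := by ring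
            _ = 0 := by rw [h21, zero_mul]
        · -- u ≡ 2 mod 4
          obtain ⟨b₂, hb₂⟩ : ∃ b₂, V = 2*b₂+1 := by
            obtain ⟨b₂, h0⟩ := hVod; exact ⟨b₂, by omega⟩
          obtain ⟨d₂', hd₂'⟩ : ∃ d₂', b₂*(b₂+1) = 2*d₂' := by
            obtain ⟨d₂', h0⟩ := Nat.even_mul_succ_self b₂; exact ⟨d₂', by omega⟩
          have hVsq : V^2 = 8*d₂' + 1 := by
            have h1 : V^2 = 4*(b₂*(b₂+1))+1 := by rw [hb₂]; ring
            omega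
          have hV3 : V^3 = V + 8*(d₂'*V) := by
            have h1 : V^3 = V^2*V := by ring
            rw [h1, hVsq]; ring
          -- ρ² = 2κ
          set Y : AdjoinRoot (fq u) := ι ((V:ℕ) : ZMod (2^e)) with hYdef
          set D : AdjoinRoot (fq u) := ι ((d₂':ℕ) : ZMod (2^e)) with hDdef
          set κ : AdjoinRoot (fq u) := 2^3*(D*Y*x) - 2^2*D with hκdef
          have hρ2 : ρ^2 = 2*κ := by
            have hZ3 : ((V:ℕ) : ZMod (2^e))^3
                = ((V:ℕ) : ZMod (2^e)) + 2^3*(((d₂':ℕ) : ZMod (2^e))*((V:ℕ) : ZMod (2^e))) := by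
              have hc : ((V^3 : ℕ) : ZMod (2^e)) = ((V + 8*(d₂'*V) : ℕ) : ZMod (2^e)) := by
                rw [hV3]
              push_cast at hc
              linear_combination hc
            have hZ2 : ((V:ℕ) : ZMod (2^e))^2 = 1 + 2^3*((d₂':ℕ) : ZMod (2^e)) := by
              have hc : ((V^2 : ℕ) : ZMod (2^e)) = ((8*d₂' + 1 : ℕ) : ZMod (2^e)) := by
                rw [hVsq]
              push_cast at hc
              linear_combination hc
            have hiV3 : Y^3 = Y + 2^3*(D*Y) := by
              show (ι ((V:ℕ) : ZMod (2^e)))^3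
                = ι ((V:ℕ) : ZMod (2^e)) + 2^3*(ι ((d₂':ℕ) : ZMod (2^e))*ι ((V:ℕ) : ZMod (2^e)))
              calc (ι ((V:ℕ) : ZMod (2^e)))^3 = ι (((V:ℕ) : ZMod (2^e))^3) := (map_pow ι _ 3).symm
                _ = ι (((V:ℕ) : ZMod (2^e)) + 2^3*(((d₂':ℕ) : ZMod (2^e))*((V:ℕ) : ZMod (2^e)))) :=
                    congrArg ι hZ3
                _ = ι ((V:ℕ) : ZMod (2^e))
                    + 2^3*(ι ((d₂':ℕ) : ZMod (2^e))*ι ((V:ℕ) : ZMod (2^e))) := by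
                    rw [map_add, map_mul, map_mul, map_pow, map_ofNat]
            have hiV2 : Y^2 = 1 + 2^3*D := by
              show (ι ((V:ℕ) : ZMod (2^e)))^2 = 1 + 2^3*ι ((d₂':ℕ) : ZMod (2^e))
              calc (ι ((V:ℕ) : ZMod (2^e)))^2 = ι (((V:ℕ) : ZMod (2^e))^2) := (map_pow ι _ 2).symm
                _ = ι (1 + 2^3*((d₂':ℕ) : ZMod (2^e))) := congrArg ι hZ2
                _ = 1 + 2^3*ι ((d₂':ℕ) : ZMod (2^e)) := by
                    rw [map_add, map_mul, map_one, map_pow, map_ofNat]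
            have hx2V : x^2 = 2*Y*x - 1 := by
              rw [hx2, hu2V]
            rw [hρdef, hκdef]
            calc (Y * x - 1)^2 = Y^2 * x^2 - 2*Y*x + 1 := by ring
              _ = Y^2 * (2*Y*x - 1) - 2*Y*x + 1 := by rw [hx2V]
              _ = 2*(Y^3*x) - Y^2 - 2*Y*x + 1 := by ring
              _ = 2*(2^3*(D*Y*x) - 2^2*D) := by rw [hiV3, hiV2]; ring
          obtain ⟨δ, hδ⟩ := aux_chain x ρ κ hxρ hρ2 (e-3)
          have hee3 : e-3+1 = e-2 := by omega
          have hee3' : e-3+2 = e-1 := by omega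
          rw [hee3, hee3'] at hδ
          -- τ
          set τ : AdjoinRoot (fq u) := ρ + 2*δ with hτdef
          have hxp : x^(2^(e-2)) = 1 + 2^(e-2)*τ := by
            rw [hδ, hτdef]
            have : (2:(AdjoinRoot (fq u)))^(e-1) = 2^(e-2)*2 := by
              rw [← pow_succ]; congr 1; omega
            rw [this]; ring
          obtain ⟨w', hw'⟩ := aux_binom ((2:(AdjoinRoot (fq u)))^(e-2)*τ) (3*m)
          have hsq0 : ((2:(AdjoinRoot (fq u)))^(e-2))^2 = 0 := by
            have : ((2:(AdjoinRoot (fq u)))^(e-2))^2 = (2^e)*(2^(e-4)) := by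
              rw [← pow_add, ← pow_mul]; congr 1; omega
            rw [this, h2e, zero_mul]
          have hf1 : x^(k-a) - 1 = 2^(e-2)*(((3*m : ℕ))*τ) := by
            have hka : k - a = 2^(e-2)*(3*m) := by rw [hm]; ring
            rw [hka, pow_mul, hxp, hw']
            push_cast
            linear_combination (τ^2*w')*hsq0
          -- x^(k+a): k+a = 4j+2
          have h4dvd : 4 ∣ (k-a) := by
            rw [hm]
            refine Dvd.dvd.mul_right ?_ m
            refine Dvd.dvd.mul_left ?_ 3
            have : (2:ℕ)^(e-2) = 4*2^(e-4) := by
              have : (2:ℕ)^(e-2) = 2^2*2^(e-4) := by rw [← pow_add]; congr 1; omega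
              simpa using this
            rw [this]
            exact Dvd.intro _ rfl
          obtain ⟨j, hj⟩ : ∃ j, k + a = 4*j+2 := by
            obtain ⟨q4, hq4⟩ := h4dvd
            refine ⟨(a-1)/2 + q4, ?_⟩
            omega
          have hx4 : x^4 = 1 + 4*(ρ + 2*κ) := by
            calc x^4 = (x^2)^2 := by ring
              _ = (1+2*ρ)^2 := by rw [hxρ]
              _ = 1 + 4*ρ + 4*ρ^2 := by ring
              _ = 1 + 4*ρ + 4*(2*κ) := by rw [hρ2]
              _ = 1 + 4*(ρ + 2*κ) := by ring
          obtain ⟨ε, hε⟩ := aux_pow_one_add (4:(AdjoinRoot (fq u))) (ρ+2*κ) j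
          have hf2 : x^(k+a) - 1 = 2*(ρ + 2*(ε+2*(ε*ρ))) := by
            rw [hj]
            have hsplit : x^(4*j+2) = (x^4)^j * x^2 := by
              rw [← pow_mul, ← pow_add]
            rw [hsplit, hx4, hε, hxρ]
            ring
          rw [hf1, hf2]
          have hτρ : τ*ρ = 2*(κ + δ*ρ) := by rw [hτdef]; linear_combination hρ2
          have h22 : (2:(AdjoinRoot (fq u)))^(e-2)*2*2 = 0 := by
            have h' : (2:(AdjoinRoot (fq u)))^(e-2)*2*2 = 2^(e-2)*2^2 := by ring
            rw [h', ← pow_add]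
            have h'' : e-2+2 = e := by omega
            rw [h'', h2e]
          linear_combination ((2:(AdjoinRoot (fq u)))^(e-2)*2*((3*m:ℕ)))*hτρ
            + (((3*m:ℕ))*(κ+δ*ρ+τ*(ε+2*(ε*ρ))))*h22
  · -- u odd
    obtain ⟨b, hb⟩ : ∃ b, u.val = 2*b+1 := by
      obtain ⟨b, hb0⟩ := huod; exact ⟨b, by omega⟩
    obtain ⟨d, hd⟩ : ∃ d, b*(b+1) = 2*d := by
      obtain ⟨d, hd0⟩ := Nat.even_mul_succ_self b; exact ⟨d, by omega⟩
    have hU2 : u.val^2 = 8*d+1 := by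
      have h1 : u.val^2 = 4*(b*(b+1))+1 := by rw [hb]; ring
      omega
    -- u^2 = 8d+1 in ZMod
    have husq : u^2 = 2^3*((d:ℕ) : ZMod (2^e)) + 1 := by
      rw [← zmod_val_cast u]
      rw [show ((u.val : ZMod (2^e))^2 = ((u.val^2 : ℕ) : ZMod (2^e))) from by push_cast; ring, hU2]
      push_cast
      ring
    -- s, c₄
    have hsc : ∃ s c₄ : ZMod (2^e), (s = 1 ∨ s = -1) ∧ u = -s + 4*c₄ := by
      rcases Nat.even_or_odd ((u.val - 1)/2) with hcase | hcase
      · -- u.val % 4 = 1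
        obtain ⟨c₄n, hc₄n⟩ : ∃ c₄n, u.val = 4*c₄n + 1 := by
          obtain ⟨q, hq⟩ := hcase
          exact ⟨q, by omega⟩
        refine ⟨-1, ((c₄n : ℕ) : ZMod (2^e)), Or.inr rfl, ?_⟩
        rw [← zmod_val_cast u, hc₄n]
        push_cast
        ring
      · -- u.val % 4 = 3
        obtain ⟨c₄n, hc₄n⟩ : ∃ c₄n, u.val = 4*c₄n + 3 := by
          obtain ⟨q, hq⟩ := hcase
          exact ⟨q, by omega⟩
        refine ⟨1, ((c₄n : ℕ) : ZMod (2^e)) + 1, Or.inl rfl, ?_⟩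
        rw [← zmod_val_cast u, hc₄n]
        push_cast
        ring
    obtain ⟨s, c₄, hsval, hu4⟩ := hsc
    have hss : s * s = 1 := by rcases hsval with h | h <;> rw [h] <;> ring
    -- x^3 = ι s + 4 H
    set H : AdjoinRoot (fq u) := 2*(ι ((d:ℕ) : ZMod (2^e)))*x - ι c₄ with hHdef
    have hx3 : x^3 = ι s + 4*H := by
      have hstep : x^3 = (ι u * ι u - 1)*x - ι u := by
        calc x^3 = x^2*x := by ring
          _ = (ι u * x - 1)*x := by rw [hx2]
          _ = ι u * x^2 - x := by ring
          _ = ι u * (ι u * x - 1) - x := by rw [hx2]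
          _ = (ι u * ι u - 1)*x - ι u := by ring
      have hu2 : ι u * ι u = 2^3*ι ((d:ℕ) : ZMod (2^e)) + 1 := by
        have h' : u * u = 2^3*((d:ℕ) : ZMod (2^e)) + 1 := by linear_combination husq
        calc ι u * ι u = ι (u*u) := (map_mul ι u u).symm
          _ = ι (2^3*((d:ℕ) : ZMod (2^e)) + 1) := congrArg ι h'
          _ = 2^3*ι ((d:ℕ) : ZMod (2^e)) + 1 := by
              rw [map_add, map_mul, map_one, map_pow, map_ofNat]
      have hus : ι u = -ι s + 4*ι c₄ := by
        calc ι u = ι (-s + 4*c₄) := congrArg ι hu4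
          _ = -ι s + 4*ι c₄ := by rw [map_add, map_neg, map_mul, map_ofNat]
      rw [hstep, hu2, hus, hHdef]
      ring
    have hιss : ι s * ι s = 1 := by rw [← map_mul, hss, map_one]
    -- x^(k-a) = 1
    have hxka : x^(k-a) = 1 := by
      by_cases he1 : e = 1
      · subst he1
        rw [if_pos (by norm_num)] at hdvd
        obtain ⟨m, hm⟩ := hdvd
        norm_num at hm
        have h2R : (2:(AdjoinRoot (fq u))) = 0 := by simpa using h2e
        have hx3' : x^3 = 1 := by
          rw [hx3]
          have h4 : (4:(AdjoinRoot (fq u))) = 0 := by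
            have : (4:(AdjoinRoot (fq u))) = 2*2 := by norm_num
            rw [this, h2R, zero_mul]
          have hs1 : ι s = 1 := by
            rcases hsval with h | h
            · rw [h, map_one]
            · rw [h, map_neg, map_one]
              linear_combination -h2R
          rw [h4, hs1]
          ring
        rw [hm, pow_mul, hx3', one_pow]
      by_cases he2' : e = 2
      · subst he2'
        rw [if_pos (by norm_num)] at hdvd
        obtain ⟨m, hm⟩ := hdvd
        have h4R : (4:(AdjoinRoot (fq u))) = 0 := by
          have : (4:(AdjoinRoot (fq u))) = 2^2 := by norm_num
          rw [this]; simpa using h2e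
        have hx3' : x^3 = ι s := by rw [hx3, h4R]; ring
        have hx6 : x^6 = 1 := by
          calc x^6 = (x^3)^2 := by ring
            _ = (ι s)^2 := by rw [hx3']
            _ = 1 := by linear_combination hιss
        rw [show 3*2^(2-1) = 6 from by norm_num] at hm
        rw [hm, pow_mul, hx6, one_pow]
      · -- e ≥ 3
        have he3 : 3 ≤ e := by omega
        rw [if_neg (by omega)] at hdvd
        obtain ⟨m, hm⟩ := hdvd
        have hx3s : x^3 = ι s * (1 + 2^2*(ι s*H)) := by
          rw [hx3]
          linear_combination (-(2^2*H))*hιss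
        have hxl0 : x^(3*2^(e-2)) = 1 := by
          rw [pow_mul, hx3s, mul_pow]
          obtain ⟨g, hg⟩ := aux_lte 2 (by norm_num) (ι s*H) (e-2)
          rw [hg]
          have hι1 : (ι s)^(2^(e-2)) = 1 := by
            have hsplit : (2:ℕ)^(e-2) = 2*2^(e-3) := by
              rw [← pow_succ']; congr 1; omega
            have h2' : (ι s)^2 = 1 := by linear_combination hιss
            rw [hsplit, pow_mul, h2', one_pow]
          have h2ee : (2:(AdjoinRoot (fq u)))^(2+(e-2)) = 0 := by
            have : 2+(e-2) = e := by omega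
            rw [this, h2e]
          rw [hι1, h2ee]
          ring
        rw [hm, pow_mul, hxl0, one_pow]
    rw [hxka]
    ring

end TwoLocal

section Glue

lemma odd_local' (p t : ℕ) (hp : p.Prime) (hpodd : p % 2 = 1) (ht : 1 ≤ t)
    (k a : ℕ) (hk2 : k % 2 = 1) (ha2 : a % 2 = 1)
    (hmod : k ≡ a [MOD p^(t-1) * ((p^2 - 1)/2)]) (u : ZMod (p^t)) :
    eval u (dickson 1 1 k) = eval u (dickson 1 1 a) := by
  rcases le_total a k with h | h
  · exact odd_local p t hp hpodd ht k a h (by omega)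
      ((Nat.modEq_iff_dvd' h).mp hmod.symm) u
  · exact (odd_local p t hp hpodd ht a k h (by omega)
      ((Nat.modEq_iff_dvd' h).mp hmod) u).symm

lemma two_local' (e : ℕ) (he : 1 ≤ e) (k a : ℕ)
    (hpar : 2 ≤ e → (k % 2 = 1 ∧ a % 2 = 1))
    (hmod : k ≡ a [MOD (if e < 3 then 3*2^(e-1) else 3*2^(e-2))]) (u : ZMod (2^e)) :
    eval u (dickson 1 1 k) = eval u (dickson 1 1 a) := by
  rcases le_total a k with h | h
  · exact two_local e he k a h hpar ((Nat.modEq_iff_dvd' h).mp hmod.symm) u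
  · exact (two_local e he a k h (fun h2 => ⟨(hpar h2).2, (hpar h2).1⟩)
      ((Nat.modEq_iff_dvd' h).mp hmod) u).symm

lemma eval_dickson_cast {n q : ℕ} (h : q ∣ n) (u : ZMod n) (k : ℕ) :
    ZMod.castHom h (ZMod q) (eval u (dickson 1 1 k))
      = eval (ZMod.castHom h (ZMod q) u) (dickson 1 1 k) := by
  rw [← eval₂_at_apply, eval₂_eq_eval_map, map_dickson, map_one]

lemma dickson_id_of_dvd {n q k : ℕ} [NeZero n] [NeZero q] (h : q ∣ n)
    (hid : ∀ u : ZMod n, eval u (dickson 1 1 k) = u) :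
    ∀ v : ZMod q, eval v (dickson 1 1 k) = v := by
  intro v
  have h1 : ZMod.castHom h (ZMod q) ((v.val : ZMod n)) = v := by
    rw [map_natCast]
    exact zmod_val_cast v
  calc eval v (dickson 1 1 k)
      = eval (ZMod.castHom h (ZMod q) ((v.val : ZMod n))) (dickson 1 1 k) := by rw [h1]
    _ = ZMod.castHom h (ZMod q) (eval ((v.val : ZMod n)) (dickson 1 1 k)) :=
        (eval_dickson_cast h _ k).symm
    _ = ZMod.castHom h (ZMod q) ((v.val : ZMod n)) := by rw [hid]
    _ = v := h1

lemma prod_dvd_of_pairwise {ι : Type*} [DecidableEq ι] (s : Finset ι) (f : ι → ℕ) (N : ℕ)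
    (hcop : ∀ i ∈ s, ∀ j ∈ s, i ≠ j → Nat.Coprime (f i) (f j))
    (hdvd : ∀ i ∈ s, f i ∣ N) : (∏ i ∈ s, f i) ∣ N := by
  induction s using Finset.induction_on with
  | empty => simp
  | insert _ _ ha ih =>
    rename_i a s'
    rw [Finset.prod_insert ha]
    apply Nat.Coprime.mul_dvd_of_dvd_of_dvd
    · apply Nat.Coprime.prod_right
      intro j hj
      exact hcop a (Finset.mem_insert_self a s') j (Finset.mem_insert_of_mem hj)
        (fun haj => ha (haj ▸ hj))
    · exact hdvd a (Finset.mem_insert_self a s')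
    · exact ih (fun i hi j hj hij => hcop i (Finset.mem_insert_of_mem hi) j
        (Finset.mem_insert_of_mem hj) hij) (fun i hi => hdvd i (Finset.mem_insert_of_mem hi))

lemma half_sq_sub_one_even (p : ℕ) (hodd : p % 2 = 1) : 2 ∣ (p^2-1)/2 := by
  obtain ⟨c, hc⟩ : ∃ c, p = 2*c+1 := ⟨p/2, by omega⟩
  have hsq : p^2 = 4*(c*c)+4*c+1 := by subst hc; ring
  rw [hsq]
  generalize c*c = m
  omega

lemma odd_of_coprime_of_even {k w : ℕ} (h2 : 2 ∣ w) (h : Nat.gcd k w = 1) : k % 2 = 1 := by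
  by_contra hk
  have h2k : 2 ∣ k := by omega
  have : (2:ℕ) ∣ 1 := h ▸ Nat.dvd_gcd h2k h2
  omega

end Glue

theorem dickson_identity_iff_local_even
    (e r : ℕ) (he : 1 ≤ e) (p ee : Fin r → ℕ)
    (hp : ∀ i, Nat.Prime (p i)) (hodd : ∀ i, Odd (p i)) (hmono : StrictMono p)
    (hee : ∀ i, 1 ≤ ee i)
    (n : ℕ) (hn : n = 2 ^ e * ∏ i, p i ^ ee i)
    (l : Fin r → ℕ) (hl : ∀ i, l i = p i ^ (ee i - 1) * ((p i ^ 2 - 1) / 2))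
    (l0 : ℕ) (hl0 : l0 = if e < 3 then 3 * 2 ^ (e - 1) else 3 * 2 ^ (e - 2))
    (w : ℕ) (hw : w = Nat.lcm l0 (Finset.univ.lcm l))
    (k : ℕ) (hk : 0 < k) (hgcd : Nat.gcd k w = 1) :
    (∀ u : ZMod n, Polynomial.eval u (Polynomial.dickson 1 1 k) = u) ↔
      ((∃ a0 : ℕ, 0 < a0 ∧ Nat.gcd a0 l0 = 1 ∧
          (∀ u : ZMod (2 ^ e), Polynomial.eval u (Polynomial.dickson 1 1 a0) = u) ∧
          k ≡ a0 [MOD l0]) ∧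
        ∀ i, ∃ a : ℕ, 0 < a ∧ Nat.gcd a (l i) = 1 ∧
          (∀ u : ZMod (p i ^ ee i), Polynomial.eval u (Polynomial.dickson 1 1 a) = u) ∧
          k ≡ a [MOD l i]) := by
  -- basic facts
  have hpodd : ∀ i, p i % 2 = 1 := fun i => Nat.odd_iff.mp (hodd i)
  haveI : NeZero n := ⟨by
    rw [hn]
    have h1 : 0 < ∏ i, p i ^ ee i :=
      Finset.prod_pos (fun i _ => pow_pos (hp i).pos _)
    have h2 : 0 < 2^e := by positivity
    exact Nat.mul_ne_zero h2.ne' h1.ne'⟩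
  haveI hne2 : NeZero (2^e) := ⟨pow_ne_zero _ (by norm_num)⟩
  haveI hnep : ∀ i, NeZero (p i ^ ee i) := fun i => ⟨pow_ne_zero _ (hp i).ne_zero⟩
  have hdvd2n : 2^e ∣ n := ⟨∏ i, p i ^ ee i, hn⟩
  have hdvdpn : ∀ i, p i ^ ee i ∣ n := by
    intro i
    rw [hn]
    exact Dvd.dvd.mul_left (Finset.dvd_prod_of_mem _ (Finset.mem_univ i)) _
  have hl0w : l0 ∣ w := hw ▸ Nat.dvd_lcm_left _ _
  have hlw : ∀ i, l i ∣ w := fun i =>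
    dvd_trans (Finset.dvd_lcm (Finset.mem_univ i)) (hw ▸ Nat.dvd_lcm_right _ _)
  have hlieven : ∀ i, 2 ∣ l i := by
    intro i
    rw [hl i]
    exact Dvd.dvd.mul_left (half_sq_sub_one_even (p i) (hpodd i)) _
  have hl0even : 2 ≤ e → 2 ∣ l0 := by
    intro he2
    rw [hl0]
    split
    · exact Dvd.dvd.mul_left (dvd_pow_self 2 (by omega)) 3
    · exact Dvd.dvd.mul_left (dvd_pow_self 2 (by omega)) 3
  constructor
  · -- forward: take a = k everywhere
    intro hid
    refine ⟨⟨k, hk, ?_, ?_, Nat.ModEq.refl k⟩, ?_⟩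
    · exact Nat.Coprime.coprime_dvd_right hl0w hgcd
    · exact dickson_id_of_dvd hdvd2n hid
    · intro i
      exact ⟨k, hk, Nat.Coprime.coprime_dvd_right (hlw i) hgcd,
        dickson_id_of_dvd (hdvdpn i) hid, Nat.ModEq.refl k⟩
  · -- backward
    rintro ⟨⟨a0, -, hg0, hid0, hm0⟩, hloc⟩ u
    -- components vanish
    have hcomp0 : ZMod.castHom hdvd2n (ZMod (2^e)) (eval u (dickson 1 1 k) - u) = 0 := by
      rw [map_sub, eval_dickson_cast]
      have hpar : 2 ≤ e → (k % 2 = 1 ∧ a0 % 2 = 1) := by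
        intro he2
        exact ⟨odd_of_coprime_of_even (dvd_trans (hl0even he2) hl0w) hgcd,
          odd_of_coprime_of_even (hl0even he2) hg0⟩
      rw [two_local' e he k a0 hpar (hl0 ▸ hm0), hid0, sub_self]
    have hcompi : ∀ i, ZMod.castHom (hdvdpn i) (ZMod (p i ^ ee i))
        (eval u (dickson 1 1 k) - u) = 0 := by
      intro i
      obtain ⟨a, -, hga, hida, hma⟩ := hloc i
      rw [map_sub, eval_dickson_cast]
      have hk2 : k % 2 = 1 :=
        odd_of_coprime_of_even (dvd_trans (hlieven i) (hlw i)) hgcd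
      have ha2 : a % 2 = 1 := odd_of_coprime_of_even (hlieven i) hga
      rw [odd_local' (p i) (ee i) (hp i) (hpodd i) (hee i) k a hk2 ha2 (hl i ▸ hma),
        hida, sub_self]
    -- combine via CRT
    set z : ZMod n := eval u (dickson 1 1 k) - u with hz
    have hcast : ∀ (q : ℕ) (hq : q ∣ n), ZMod.castHom hq (ZMod q) z = ((z.val : ℕ) : ZMod q) := by
      intro q hq
      conv_lhs => rw [← zmod_val_cast z]
      rw [map_natCast]
    have hdvd2z : 2^e ∣ z.val := by
      rw [← ZMod.natCast_eq_zero_iff, ← hcast (2^e) hdvd2n]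
      exact hcomp0
    have hdvdpz : ∀ i, p i ^ ee i ∣ z.val := by
      intro i
      rw [← ZMod.natCast_eq_zero_iff, ← hcast _ (hdvdpn i)]
      exact hcompi i
    have hprodz : (∏ i, p i ^ ee i) ∣ z.val := by
      apply prod_dvd_of_pairwise
      · intro i _ j _ hij
        exact Nat.Coprime.pow _ _ ((Nat.coprime_primes (hp i) (hp j)).mpr (hmono.injective.ne hij))
      · intro i _
        exact hdvdpz i
    have hcop : Nat.Coprime (2^e) (∏ i, p i ^ ee i) := by
      apply Nat.Coprime.prod_right
      intro i _
      refine Nat.Coprime.pow _ _ ((Nat.coprime_primes Nat.prime_two (hp i)).mpr ?_)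
      have := hpodd i
      omega
    have hnz : n ∣ z.val := by
      have h2 := Nat.Coprime.mul_dvd_of_dvd_of_dvd hcop hdvd2z hprodz
      rwa [← hn] at h2
    have hz0 : z = 0 := by
      rw [← zmod_val_cast z]
      exact (ZMod.natCast_eq_zero_iff _ _).mpr hnz
    have := hz0
    rw [hz, sub_eq_zero] at this
    exact this
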